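/- Let p be a prime, O_M a complete discrete valuation ring of characteristic p with fraction field M, and L/M a purely inseparable field extension of degree p. Let O_L be the discrete valuation ring with fraction field L lying over O_M (the valuation ring of the unique extension of the valuation to L), and suppose the extension has relative ramification index one, i.e. a uniformizer of O_M remains a uniformizer of O_L. Then there exist a unit a ∈ O_M^× and an element b ∈ O_L with b^p = a such that the O_M-algebra homomorphism O_M[Y]/(Y^p − a) → O_L sending Y to b is an isomorphism. -/

import Mathlib

open Polynomial in
lemma key_aux {K E : Type*} [Field K] [Field E] [Algebra K E] {p : ℕ} (hp : p.Prime)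
    [CharP K p] {x : E} {n : ℕ} {c : K} (hc : x ^ p ^ n = algebraMap K E c)
    (hdeg : (minpoly K x).natDegree ≤ p) :
    (∃ y : K, algebraMap K E y = x) ∨
      ((minpoly K x).natDegree = p ∧
        (minpoly K x).map (algebraMap K E) = X ^ p - C (x ^ p)) := by
  haveI : Fact p.Prime := ⟨hp⟩
  haveI : CharP E p := charP_of_injective_ringHom (algebraMap K E).injective p
  have hposn : 0 < p ^ n := pow_pos hp.pos n
  have hintg : IsIntegral K x :=
    ⟨X ^ p ^ n - C c, monic_X_pow_sub_C c hposn.ne', by simp [hc]⟩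
  set g := minpoly K x with hg
  have hgmonic : g.Monic := minpoly.monic hintg
  have hdvd : g ∣ X ^ p ^ n - C c := minpoly.dvd K x (by simp [hc])
  have hXC : (X ^ p ^ n - C c).map (algebraMap K E) = (X - C x) ^ p ^ n := by
    rw [Polynomial.map_sub, Polynomial.map_pow, map_X, map_C, ← hc, sub_pow_char_pow, ← C_pow]
  have hmapdvd : g.map (algebraMap K E) ∣ (X - C x) ^ p ^ n := by
    rw [← hXC]; exact Polynomial.map_dvd _ hdvd
  obtain ⟨i, hi, hassoc⟩ := (dvd_prime_pow (prime_X_sub_C x) _).1 hmapdvd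
  have heq : g.map (algebraMap K E) = (X - C x) ^ i :=
    Polynomial.eq_of_monic_of_associated (hgmonic.map _) ((monic_X_sub_C x).pow i) hassoc
  have hdi : g.natDegree = i := by
    have := congrArg natDegree heq
    rwa [natDegree_map, natDegree_pow, natDegree_X_sub_C, mul_one] at this
  have hd1 : 0 < g.natDegree := minpoly.natDegree_pos hintg
  by_cases hdp : p ∣ g.natDegree
  · have hdeq : g.natDegree = p := le_antisymm hdeg (Nat.le_of_dvd hd1 hdp)
    right
    refine ⟨hdeq, ?_⟩
    rw [heq, ← hdi, hdeq, sub_pow_char, ← C_pow]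
  · left
    have hnc : (g.map (algebraMap K E)).nextCoeff = algebraMap K E g.nextCoeff :=
      nextCoeff_map (algebraMap K E).injective g
    have h2 : ((X - C x) ^ i).nextCoeff = i • (-x) := by
      rw [(monic_X_sub_C x).nextCoeff_pow, nextCoeff_X_sub_C]
    have h3 : algebraMap K E g.nextCoeff = -((g.natDegree : E) * x) := by
      rw [← hnc, heq, h2, hdi]; ring
    have hdK : (g.natDegree : K) ≠ 0 := by
      rw [Ne, CharP.cast_eq_zero_iff K p]; exact hdp
    refine ⟨-(g.natDegree : K)⁻¹ * g.nextCoeff, ?_⟩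
    rw [map_mul, map_neg, map_inv₀, map_natCast, h3]
    have hdE : (g.natDegree : E) ≠ 0 := by
      rw [Ne, CharP.cast_eq_zero_iff E p]; exact hdp
    field_simp

lemma approx_aux {O_M O_L : Type*} [CommRing O_M] [IsDomain O_M] [IsDiscreteValuationRing O_M]
    [IsAdicComplete (IsLocalRing.maximalIdeal O_M) O_M]
    [CommRing O_L] [IsDomain O_L] [IsDiscreteValuationRing O_L] [Algebra O_M O_L]
    {π : O_M} (hπ : Irreducible π) (hπL : Irreducible (algebraMap O_M O_L π))
    {m : ℕ} (v : Fin m → O_L)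
    (hstep : ∀ x : O_L, ∃ (c : Fin m → O_M) (y : O_L),
      x = (∑ i, algebraMap O_M O_L (c i) * v i) + algebraMap O_M O_L π * y)
    (x : O_L) : ∃ C : Fin m → O_M, x = ∑ i, algebraMap O_M O_L (C i) * v i := by
  classical
  choose cs ys hxy using hstep
  set f := algebraMap O_M O_L with hf
  set F : ℕ → O_L := fun n => ys^[n] x with hF
  have hFsucc : ∀ n, F n = (∑ i, f (cs (F n) i) * v i) + f π * F (n + 1) := by
    intro n
    have h1 : F (n + 1) = ys (F n) := Function.iterate_succ_apply' ys n x
    rw [h1]; exact hxy (F n)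
  set s : ℕ → Fin m → O_M := fun n i => ∑ k ∈ Finset.range n, π ^ k * cs (F k) i with hs
  have claim1 : ∀ n, x = (∑ i, f (s n i) * v i) + f π ^ n * F n := by
    intro n; induction n with
    | zero => simp [s, F]
    | succ n ih =>
      conv_lhs => rw [ih, hFsucc n]
      have h2 : ∀ i ∈ Finset.univ, f (s (n+1) i) * v i
          = f (s n i) * v i + f π ^ n * (f (cs (F n) i) * v i) := by
        intro i _
        rw [show s (n+1) i = s n i + π ^ n * cs (F n) i from Finset.sum_range_succ _ n,
          map_add, map_mul, map_pow, add_mul, mul_assoc]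
      rw [Finset.sum_congr rfl h2, Finset.sum_add_distrib, ← Finset.mul_sum, pow_succ]
      ring
  have hItop : ∀ a : ℕ, ((IsLocalRing.maximalIdeal O_M) ^ a • ⊤ : Submodule O_M O_M)
      = Ideal.span {π ^ a} := by
    intro a
    rw [smul_eq_mul, Ideal.mul_top, hπ.maximalIdeal_eq, Ideal.span_singleton_pow]
  have hcauchy : ∀ i : Fin m, ∃ Ci : O_M, ∀ n, s n i ≡ Ci
      [SMOD ((IsLocalRing.maximalIdeal O_M) ^ n • ⊤ : Submodule O_M O_M)] := by
    intro i
    apply IsPrecomplete.prec (IsAdicComplete.toIsPrecomplete)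
    intro a b hab
    rw [SModEq.sub_mem, hItop a]
    have h3 : s b i - s a i = ∑ k ∈ Finset.Ico a b, π ^ k * cs (F k) i := by
      rw [hs]; exact (Finset.sum_Ico_eq_sub _ hab).symm
    rw [show s a i - s b i = -(s b i - s a i) by ring, h3]
    refine Submodule.neg_mem _ (Ideal.sum_mem _ ?_)
    intro k hk
    rw [Ideal.mem_span_singleton]
    exact Dvd.dvd.mul_right (pow_dvd_pow π (Finset.mem_Ico.1 hk).1) _
  choose Cfun hC using hcauchy
  refine ⟨Cfun, ?_⟩
  have hdvd : ∀ n : ℕ, f π ^ n ∣ x - ∑ i, f (Cfun i) * v i := by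
    intro n
    have h1 : x - ∑ i, f (Cfun i) * v i
        = (∑ i, (f (s n i) - f (Cfun i)) * v i) + f π ^ n * F n := by
      conv_lhs => rw [claim1 n]
      rw [Finset.sum_congr rfl (fun i _ => sub_mul (f (s n i)) (f (Cfun i)) (v i)),
        Finset.sum_sub_distrib]
      ring
    rw [h1]
    refine dvd_add (Finset.dvd_sum ?_) (Dvd.intro _ rfl)
    intro i _
    have h4 : π ^ n ∣ s n i - Cfun i := by
      have h5 := (hC i n)
      rw [SModEq.sub_mem, hItop n, Ideal.mem_span_singleton] at h5
      exact h5
    obtain ⟨t, ht⟩ := h4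
    have h6 : f (s n i) - f (Cfun i) = f π ^ n * f t := by
      rw [← map_pow, ← map_mul, ← map_sub, ht]
    rw [h6, mul_assoc]
    exact Dvd.intro _ rfl
  have hzero : x - ∑ i, f (Cfun i) * v i = 0 := by
    by_contra hne
    obtain ⟨n, u, hu⟩ := IsDiscreteValuationRing.eq_unit_mul_pow_irreducible hne hπL
    obtain ⟨t, ht⟩ := hdvd (n + 1)
    rw [hu] at ht
    have hcan : (u : O_L) = f π * t := by
      have hπn : (f π) ^ n ≠ 0 := pow_ne_zero _ hπL.ne_zero
      apply mul_left_cancel₀ hπn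
      rw [show f π ^ n * (f π * t) = f π ^ (n+1) * t by ring, ← ht]
      ring
    exact hπL.not_isUnit (isUnit_of_dvd_unit ⟨t, hcan⟩ u.isUnit)
  rw [← sub_eq_zero]
  exact hzero

lemma extract_unit {O_M O_L : Type*} [CommRing O_M] [IsDomain O_M] [IsDiscreteValuationRing O_M]
    [CommRing O_L] [IsDomain O_L] [Algebra O_M O_L]
    (hinj : Function.Injective (algebraMap O_M O_L))
    {π : O_M} (hπ : Irreducible π) {m : ℕ} (v : Fin m → O_L)
    {μ : Fin m → O_M} (j0 : Fin m) (h0 : μ j0 ≠ 0)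
    (hrel : ∑ j, algebraMap O_M O_L (μ j) * v j = 0) :
    ∃ ν : Fin m → O_M, (∑ j, algebraMap O_M O_L (ν j) * v j = 0) ∧ ∃ j, IsUnit (ν j) := by
  have hπL : algebraMap O_M O_L π ≠ 0 := fun h => hπ.ne_zero (hinj (by rw [h, map_zero]))
  obtain ⟨n, u, hu⟩ := IsDiscreteValuationRing.eq_unit_mul_pow_irreducible h0 hπ
  clear h0
  suffices H : ∀ (n : ℕ) (μ : Fin m → O_M) (u : O_Mˣ), μ j0 = ↑u * π ^ n →
      (∑ j, algebraMap O_M O_L (μ j) * v j = 0) →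
      ∃ ν : Fin m → O_M, (∑ j, algebraMap O_M O_L (ν j) * v j = 0) ∧ ∃ j, IsUnit (ν j) by
    exact H n μ u hu hrel
  intro n
  induction n with
  | zero =>
    intro μ u hu hrel
    exact ⟨μ, hrel, j0, by rw [hu, pow_zero, mul_one]; exact u.isUnit⟩
  | succ n ih =>
    intro μ u hu hrel
    by_cases hex : ∃ j, IsUnit (μ j)
    · exact ⟨μ, hrel, hex⟩
    · push_neg at hex
      have hdvd : ∀ j, π ∣ μ j := by
        intro j
        have h1 : μ j ∈ IsLocalRing.maximalIdeal O_M := hex j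
        rwa [hπ.maximalIdeal_eq, Ideal.mem_span_singleton] at h1
      choose ν hν using hdvd
      have hν0 : ν j0 = ↑u * π ^ n := by
        apply mul_left_cancel₀ hπ.ne_zero
        rw [← hν j0, hu]; ring
      have hrelν : ∑ j, algebraMap O_M O_L (ν j) * v j = 0 := by
        have h2 : algebraMap O_M O_L π * ∑ j, algebraMap O_M O_L (ν j) * v j = 0 := by
          rw [Finset.mul_sum, ← hrel]
          refine Finset.sum_congr rfl fun j _ => ?_
          rw [hν j, map_mul]; ring
        exact (mul_eq_zero.1 h2).resolve_left hπL
      exact ih ν u hν0 hrelν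

/-- From the proof of Lemma 5.1 (sepinsep) of the paper: if `L/M` is a purely inseparable
extension of degree `p` of complete discrete valuation fields of characteristic `p` with
relative ramification index one, then `O_L ≅ O_M[Y]/(Y^p − a)` for some unit `a ∈ O_M^×`;
more precisely, there are a unit `a ∈ O_M^×` and `b ∈ O_L` with `b^p = a` such that the
`O_M`-algebra map `O_M[Y] → O_L`, `Y ↦ b`, is surjective with kernel `(Y^p − a)`. -/
theorem stmt_8 (p : ℕ) (hp : p.Prime)
    (O_M : Type*) [CommRing O_M] [IsDomain O_M] [IsDiscreteValuationRing O_M] [CharP O_M p]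
    [IsAdicComplete (IsLocalRing.maximalIdeal O_M) O_M]
    (M : Type*) [Field M] [Algebra O_M M] [IsFractionRing O_M M]
    (L : Type*) [Field L] [Algebra M L] [IsPurelyInseparable M L]
    (hdeg : Module.finrank M L = p)
    (O_L : Type*) [CommRing O_L] [IsDomain O_L] [IsDiscreteValuationRing O_L]
    [Algebra O_L L] [IsFractionRing O_L L]
    [Algebra O_M O_L] [Algebra O_M L] [IsScalarTower O_M O_L L] [IsScalarTower O_M M L]
    (hint : ∀ z : M, (∃ y : O_L, algebraMap O_L L y = algebraMap M L z) →
      ∃ w : O_M, algebraMap O_M M w = z)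
    (π_M : O_M) (hπM : Irreducible π_M)
    (hram : Irreducible (algebraMap O_M O_L π_M)) :
    ∃ (a : O_M) (b : O_L), IsUnit a ∧ b ^ p = algebraMap O_M O_L a ∧
      Function.Surjective (Polynomial.aeval b : Polynomial O_M →ₐ[O_M] O_L) ∧
        RingHom.ker (Polynomial.aeval b : Polynomial O_M →ₐ[O_M] O_L) =
          Ideal.span {(Polynomial.X : Polynomial O_M) ^ p - Polynomial.C a} := by
  classical
  haveI : Fact p.Prime := ⟨hp⟩
  have hinjMO : Function.Injective (algebraMap O_M M) := IsFractionRing.injective O_M M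
  have hinjL : Function.Injective (algebraMap O_L L) := IsFractionRing.injective O_L L
  have hinjML : Function.Injective (algebraMap M L) := (algebraMap M L).injective
  set f := algebraMap O_M O_L with hf
  have htowML : ∀ w : O_M, algebraMap O_L L (f w) = algebraMap M L (algebraMap O_M M w) := by
    intro w
    rw [← IsScalarTower.algebraMap_apply O_M O_L L, IsScalarTower.algebraMap_apply O_M M L]
  have hinjf : Function.Injective f := by
    intro x y h
    apply hinjMO; apply hinjML
    rw [← htowML, ← htowML, h]
  haveI : CharP M p := charP_of_injective_ringHom hinjMO p
  haveI : CharP L p := charP_of_injective_ringHom hinjML p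
  haveI : CharP O_L p := charP_of_injective_ringHom hinjf p
  haveI : FiniteDimensional M L := FiniteDimensional.of_finrank_pos (by rw [hdeg]; exact hp.pos)
  have hcap : ∀ x : O_L, (∃ z : M, algebraMap M L z = algebraMap O_L L x) →
      ∃ w : O_M, f w = x := by
    rintro x ⟨z, hz⟩
    obtain ⟨w, hw⟩ := hint z ⟨x, hz.symm⟩
    exact ⟨w, hinjL (by rw [htowML, hw, hz])⟩
  have hC1 : ∀ x : L, ∃ cM : M, algebraMap M L cM = x ^ p := by
    intro x
    obtain ⟨n, hn⟩ := IsPurelyInseparable.pow_mem M p x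
    obtain ⟨y, hy⟩ := hn
    have hdegle : (minpoly M x).natDegree ≤ p := by
      have := minpoly.natDegree_le (A := M) x; rwa [hdeg] at this
    rcases key_aux hp (x := x) (n := n) (c := y) hy.symm hdegle with ⟨z, hz⟩ | ⟨_, hmap⟩
    · exact ⟨z ^ p, by rw [map_pow, hz]⟩
    · refine ⟨-((minpoly M x).coeff 0), ?_⟩
      have h0 := congrArg (fun P => Polynomial.coeff P 0) hmap
      have hne : ¬ ((0:ℕ) = p) := fun h => hp.ne_zero h.symm
      simp only [Polynomial.coeff_map, Polynomial.coeff_sub, Polynomial.coeff_X_pow,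
        Polynomial.coeff_C, if_pos rfl, if_neg hne, zero_sub] at h0
      rw [map_neg, h0, neg_neg]
      simp
  by_cases hres : ∃ b : O_L, ∀ w : O_M, b - f w ∉ IsLocalRing.maximalIdeal O_L
  case neg =>
    exfalso
    push_neg at hres
    have hstep1 : ∀ x : O_L, ∃ (c : Fin 1 → O_M) (y : O_L),
        x = (∑ i, f (c i) * (fun _ : Fin 1 => (1:O_L)) i) + f π_M * y := by
      intro x
      obtain ⟨w, hw⟩ := hres x
      rw [hram.maximalIdeal_eq, Ideal.mem_span_singleton] at hw
      obtain ⟨y, hy⟩ := hw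
      exact ⟨fun _ => w, y, by rw [Fin.sum_univ_one, mul_one, ← hy]; ring⟩
    have hsurjf : Function.Surjective f := by
      intro x
      obtain ⟨C, hC⟩ := approx_aux hπM hram _ hstep1 x
      exact ⟨C 0, by rw [hC, Fin.sum_univ_one, mul_one]⟩
    have hsurjML : Function.Surjective (algebraMap M L) := by
      intro z
      obtain ⟨xx, yy, _, hz⟩ := IsFractionRing.div_surjective (A := O_L) z
      obtain ⟨x', hx'⟩ := hsurjf xx
      obtain ⟨y', hy'⟩ := hsurjf yy
      refine ⟨algebraMap O_M M x' / algebraMap O_M M y', ?_⟩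
      rw [map_div₀, ← htowML, ← htowML, hx', hy', hz]
    have hone : Module.finrank M L = 1 := by
      have hbij : Function.Bijective (Algebra.ofId M L) := by
        constructor
        · intro u v h
          apply hinjML
          simpa only [Algebra.ofId_apply] using h
        · intro z
          obtain ⟨u, hu⟩ := hsurjML z
          exact ⟨u, by rw [Algebra.ofId_apply, hu]⟩
      let e := AlgEquiv.ofBijective (Algebra.ofId M L) hbij
      rw [← e.toLinearEquiv.finrank_eq]
      exact Module.finrank_self M
    exact hp.ne_one (by rw [← hdeg, hone])
  case pos =>
  obtain ⟨b, hb⟩ := hres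
  set I := IsLocalRing.maximalIdeal O_L with hI
  letI : Field (O_L ⧸ I) := Ideal.Quotient.field I
  set q : O_L →+* O_L ⧸ I := Ideal.Quotient.mk I with hq
  set φ : O_M →+* O_L ⧸ I := q.comp f with hφ
  haveI : CharP (O_L ⧸ I) p := by
    have h0 : (p : O_L ⧸ I) = 0 := by
      rw [← map_natCast q p, CharP.cast_eq_zero O_L p, map_zero]
    have := CharP.ringChar_of_prime_eq_zero hp h0
    exact this ▸ ringChar.charP (O_L ⧸ I)
  have hφunit : ∀ w : O_M, φ w ≠ 0 → IsUnit w := by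
    intro w h
    by_contra hw
    apply h
    have h1 : w ∈ IsLocalRing.maximalIdeal O_M := hw
    rw [hπM.maximalIdeal_eq, Ideal.mem_span_singleton] at h1
    obtain ⟨t, ht⟩ := h1
    have h2 : f w ∈ I := by
      rw [hI, hram.maximalIdeal_eq, Ideal.mem_span_singleton]
      exact ⟨f t, by rw [ht, map_mul]⟩
    exact Ideal.Quotient.eq_zero_iff_mem.2 h2
  set F : Subfield (O_L ⧸ I) :=
    { φ.range with
      inv_mem' := by
        rintro x hx
        obtain ⟨w, rfl⟩ := hx
        by_cases h0 : φ w = 0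
        · rw [h0, inv_zero]; exact ⟨0, map_zero φ⟩
        · obtain ⟨u, hu⟩ := hφunit w h0
          refine ⟨↑u⁻¹, ?_⟩
          have h1 : φ ↑u⁻¹ * φ w = 1 := by
            rw [← map_mul, ← hu, Units.inv_mul, map_one]
          exact eq_inv_of_mul_eq_one_left h1 } with hF
  have hFinj : Function.Injective (algebraMap F (O_L ⧸ I)) := fun a b h => Subtype.ext h
  haveI : CharP F p := by
    constructor
    intro n
    constructor
    · intro h
      rw [← CharP.cast_eq_zero_iff (O_L ⧸ I) p n,
        ← map_natCast (algebraMap F (O_L ⧸ I)) n, h, map_zero]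
    · intro h
      apply hFinj
      rw [map_natCast, map_zero]
      exact (CharP.cast_eq_zero_iff (O_L ⧸ I) p n).2 h
  set β : O_L ⧸ I := q b with hβ
  have hβnot : ¬∃ y : F, algebraMap F (O_L ⧸ I) y = β := by
    rintro ⟨y, hy⟩
    obtain ⟨w, hw⟩ := y.2
    apply hb w
    apply Ideal.Quotient.eq_zero_iff_mem.1
    rw [map_sub, sub_eq_zero]
    have h1 : φ w = q b := by rw [hw]; exact hy
    exact h1.symm
  obtain ⟨cM, hcM⟩ := hC1 (algebraMap O_L L b)
  obtain ⟨a, ha⟩ := hcap (b ^ p) ⟨cM, by rw [hcM, map_pow]⟩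
  have hβp : β ^ p = φ a := by
    rw [hβ, ← map_pow, ← ha]
    rfl
  set ca : F := ⟨φ a, ⟨a, rfl⟩⟩ with hca
  have hcak : algebraMap F (O_L ⧸ I) ca = φ a := rfl
  have hcβ : β ^ p ^ 1 = algebraMap F (O_L ⧸ I) ca := by rw [pow_one, hβp, hcak]
  have hmono : ((Polynomial.X : Polynomial F) ^ p - Polynomial.C ca).Monic :=
    Polynomial.monic_X_pow_sub_C ca hp.ne_zero
  have hdvdF : minpoly F β ∣ (Polynomial.X : Polynomial F) ^ p - Polynomial.C ca :=
    minpoly.dvd F β (by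
      rw [map_sub, map_pow, Polynomial.aeval_X, Polynomial.aeval_C, hcak, ← hβp, sub_self])
  have hdegleF : (minpoly F β).natDegree ≤ p := by
    have := Polynomial.natDegree_le_of_dvd hdvdF hmono.ne_zero
    rwa [Polynomial.natDegree_X_pow_sub_C] at this
  rcases key_aux hp hcβ hdegleF with h | ⟨hdegp, _⟩
  · exact absurd h hβnot
  have hLI : LinearIndependent F (fun i : Fin p => β ^ (i : ℕ)) := by
    have h1 := linearIndependent_pow (K := F) β
    rwa [hdegp] at h1
  have hindep : ∀ μ : Fin p → O_M, (∑ i, f (μ i) * b ^ (i : ℕ)) ∈ I →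
      ∀ i, ¬ IsUnit (μ i) := by
    intro μ hμ i0 hunit
    have h1 : ∑ i : Fin p, (⟨φ (μ i), ⟨μ i, rfl⟩⟩ : F) • β ^ (i : ℕ) = 0 := by
      have h2 : q (∑ i, f (μ i) * b ^ (i : ℕ)) = 0 := Ideal.Quotient.eq_zero_iff_mem.2 hμ
      rw [map_sum] at h2
      rw [← h2]
      refine Finset.sum_congr rfl fun i _ => ?_
      rw [map_mul, map_pow]
      rfl
    have h3 := Fintype.linearIndependent_iff.1 hLI _ h1 i0
    have h4 : φ (μ i0) = 0 := congrArg Subtype.val h3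
    have h5 : IsUnit (φ (μ i0)) := hunit.map φ
    rw [h4] at h5
    exact (not_isUnit_zero : ¬ IsUnit (0 : O_L ⧸ I)) h5
  have hstepb : ∀ x : O_L, ∃ (c : Fin p → O_M) (y : O_L),
      x = (∑ i, f (c i) * (fun i : Fin p => b ^ (i : ℕ)) i) + f π_M * y := by
    intro x
    set v' : Fin (p + 1) → O_L := Fin.snoc (fun i : Fin p => b ^ (i : ℕ)) x with hv'
    have hnotLI : ¬ LinearIndependent M (fun j => algebraMap O_L L (v' j)) := by
      intro h
      have hcard := h.fintype_card_le_finrank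
      rw [hdeg, Fintype.card_fin] at hcard
      omega
    obtain ⟨g0, hg0, j0, hj0⟩ := Fintype.not_linearIndependent_iff.1 hnotLI
    obtain ⟨d, hd⟩ := IsLocalization.exist_integer_multiples (nonZeroDivisors O_M)
      Finset.univ g0
    choose μ hμ using fun i : Fin (p + 1) => hd i (Finset.mem_univ i)
    have hdM : algebraMap O_M M ↑d ≠ 0 :=
      fun h => (nonZeroDivisors.ne_zero d.2) (hinjMO (by rw [h, map_zero]))
    have hdmul : ∀ j, algebraMap O_M M (μ j) = algebraMap O_M M ↑d * g0 j := by
      intro j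
      rw [hμ j, Algebra.smul_def]
    have hrelL : ∑ j, algebraMap M L (algebraMap O_M M (μ j)) * algebraMap O_L L (v' j)
        = 0 := by
      calc ∑ j, algebraMap M L (algebraMap O_M M (μ j)) * algebraMap O_L L (v' j)
          = algebraMap M L (algebraMap O_M M ↑d)
            * ∑ j, g0 j • algebraMap O_L L (v' j) := by
            rw [Finset.mul_sum]
            refine Finset.sum_congr rfl fun j _ => ?_
            rw [hdmul j, map_mul, Algebra.smul_def]; ring
        _ = 0 := by rw [hg0, mul_zero]
    have hrelOL : ∑ j, f (μ j) * v' j = 0 := by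
      apply hinjL
      rw [map_sum, map_zero, ← hrelL]
      refine Finset.sum_congr rfl fun j _ => ?_
      rw [map_mul, htowML]
    have hμj0 : μ j0 ≠ 0 := by
      intro h
      apply hj0
      have h1 := hdmul j0
      rw [h, map_zero] at h1
      rcases mul_eq_zero.1 h1.symm with h3 | h3
      · exact absurd h3 hdM
      · exact h3
    obtain ⟨ν, hνrel, j1, hj1⟩ := extract_unit hinjf hπM v' j0 hμj0 hrelOL
    have hsplit : ∑ i : Fin p, f (ν i.castSucc) * b ^ (i : ℕ) + f (ν (Fin.last p)) * x
        = 0 := by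
      rw [← hνrel, Fin.sum_univ_castSucc]
      congr 1
      · refine Finset.sum_congr rfl fun i _ => ?_
        rw [hv', Fin.snoc_castSucc]
      · rw [hv', Fin.snoc_last]
    by_cases hul : IsUnit (ν (Fin.last p))
    · obtain ⟨u, hu⟩ := hul
      refine ⟨fun i => -(↑u⁻¹ * ν i.castSucc), 0, ?_⟩
      rw [mul_zero, add_zero]
      have h7 : f ↑u⁻¹ * f (ν (Fin.last p)) = 1 := by
        rw [← map_mul, ← hu, Units.inv_mul, map_one]
      have h8 : f (ν (Fin.last p)) * x = -∑ i : Fin p, f (ν i.castSucc) * b ^ (i : ℕ) :=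
        eq_neg_of_add_eq_zero_right hsplit
      calc x = f ↑u⁻¹ * f (ν (Fin.last p)) * x := by rw [h7, one_mul]
        _ = f ↑u⁻¹ * (f (ν (Fin.last p)) * x) := by ring
        _ = f ↑u⁻¹ * (-∑ i : Fin p, f (ν i.castSucc) * b ^ (i : ℕ)) := by rw [h8]
        _ = ∑ i : Fin p, f (-(↑u⁻¹ * ν i.castSucc)) * b ^ (i : ℕ) := by
            rw [mul_neg, Finset.mul_sum, ← Finset.sum_neg_distrib]
            refine Finset.sum_congr rfl fun i _ => ?_
            rw [map_neg, map_mul]; ring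
    · exfalso
      have h8 : π_M ∣ ν (Fin.last p) := by
        have h9 : ν (Fin.last p) ∈ IsLocalRing.maximalIdeal O_M := hul
        rwa [hπM.maximalIdeal_eq, Ideal.mem_span_singleton] at h9
      obtain ⟨t, ht⟩ := h8
      have h9 : (∑ i : Fin p, f (ν i.castSucc) * b ^ (i : ℕ)) ∈ I := by
        have h10 : ∑ i : Fin p, f (ν i.castSucc) * b ^ (i : ℕ) = f π_M * (-(f t * x)) := by
          rw [eq_neg_of_add_eq_zero_left hsplit, ht, map_mul]; ring
        rw [hI, hram.maximalIdeal_eq, Ideal.mem_span_singleton, h10]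
        exact Dvd.intro _ rfl
      rcases Fin.eq_castSucc_or_eq_last j1 with ⟨j2, hj2⟩ | hj2
      · exact hindep _ h9 j2 (hj2 ▸ hj1)
      · exact hul (hj2 ▸ hj1)
  have hsurj : ∀ x : O_L, ∃ C : Fin p → O_M, x = ∑ i, f (C i) * b ^ (i : ℕ) :=
    fun x => approx_aux hπM hram _ hstepb x
  have hbunit : IsUnit b := by
    by_contra h
    have h1 : b ∈ I := h
    have h2 := hb 0
    rw [map_zero, sub_zero] at h2
    exact h2 h1
  have haunit : IsUnit a := by
    by_contra h
    have h1 : a ∈ IsLocalRing.maximalIdeal O_M := h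
    rw [hπM.maximalIdeal_eq, Ideal.mem_span_singleton] at h1
    obtain ⟨t, ht⟩ := h1
    have h2 : IsUnit (f π_M) := isUnit_of_mul_isUnit_left
      (y := f t) (by rw [← map_mul, ← ht, ha]; exact hbunit.pow p)
    exact hram.not_isUnit h2
  refine ⟨a, b, haunit, ha.symm, ?_, ?_⟩
  · intro x
    obtain ⟨C, hC⟩ := hsurj x
    refine ⟨∑ i : Fin p, Polynomial.C (C i) * Polynomial.X ^ (i : ℕ), ?_⟩
    rw [map_sum, hC]
    refine Finset.sum_congr rfl fun i _ => ?_
    rw [map_mul, map_pow, Polynomial.aeval_C, Polynomial.aeval_X]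
  · have hbLnot : ¬∃ z : M, algebraMap M L z = algebraMap O_L L b := by
      rintro ⟨z, hz⟩
      obtain ⟨w, hw⟩ := hcap b ⟨z, hz⟩
      exact hb w (by rw [← hw, sub_self]; exact Ideal.zero_mem I)
    have hbLp : (algebraMap O_L L b) ^ p ^ 1 = algebraMap M L (algebraMap O_M M a) := by
      rw [pow_one, ← map_pow, ← ha, htowML]
    have hdegleM : (minpoly M (algebraMap O_L L b)).natDegree ≤ p := by
      have := minpoly.natDegree_le (A := M) (algebraMap O_L L b); rwa [hdeg] at this
    rcases key_aux hp hbLp hdegleM with h | ⟨_, hmap⟩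
    · exact absurd h hbLnot
    have hbp1 : (algebraMap O_L L b) ^ p = algebraMap M L (algebraMap O_M M a) := by
      have := hbLp; rwa [pow_one] at this
    have hminp : minpoly M (algebraMap O_L L b)
        = Polynomial.X ^ p - Polynomial.C (algebraMap O_M M a) := by
      apply Polynomial.map_injective (algebraMap M L) hinjML
      rw [hmap, Polynomial.map_sub, Polynomial.map_pow, Polynomial.map_X, Polynomial.map_C,
        hbp1]
    set gpoly : Polynomial O_M := Polynomial.X ^ p - Polynomial.C a with hgp
    have hgm : gpoly.Monic := Polynomial.monic_X_pow_sub_C a hp.ne_zero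
    have hgmap : gpoly.map (algebraMap O_M M)
        = Polynomial.X ^ p - Polynomial.C (algebraMap O_M M a) := by
      rw [hgp, Polynomial.map_sub, Polynomial.map_pow, Polynomial.map_X, Polynomial.map_C]
    refine Ideal.ext fun fpol => ?_
    rw [RingHom.mem_ker, Ideal.mem_span_singleton]
    constructor
    · intro hfker
      have h1 : Polynomial.aeval (algebraMap O_L L b) (fpol.map (algebraMap O_M M)) = 0 := by
        rw [Polynomial.aeval_map_algebraMap, Polynomial.aeval_algebraMap_apply, hfker,
          map_zero]
      have h2 := minpoly.dvd M (algebraMap O_L L b) h1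
      rw [hminp, ← hgmap] at h2
      have hr := Polynomial.modByMonic_add_div fpol gpoly
      have hrsub : fpol %ₘ gpoly = fpol - gpoly * (fpol /ₘ gpoly) := by
        rw [eq_sub_iff_add_eq]; exact hr
      have hdv : gpoly.map (algebraMap O_M M) ∣ (fpol %ₘ gpoly).map (algebraMap O_M M) := by
        have hmm : (fpol %ₘ gpoly).map (algebraMap O_M M)
            = fpol.map (algebraMap O_M M)
              - gpoly.map (algebraMap O_M M) * (fpol /ₘ gpoly).map (algebraMap O_M M) := by
          rw [hrsub]
          simp only [Polynomial.map_sub, Polynomial.map_mul]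
        rw [hmm]
        exact dvd_sub h2 (Dvd.intro _ rfl)
      have hr0 : (fpol %ₘ gpoly).map (algebraMap O_M M) = 0 := by
        by_contra hne
        have hd1 := Polynomial.degree_le_of_dvd hdv hne
        have hd2 : ((fpol %ₘ gpoly).map (algebraMap O_M M)).degree ≤ (fpol %ₘ gpoly).degree :=
          Polynomial.degree_map_le
        have hd3 : (fpol %ₘ gpoly).degree < gpoly.degree :=
          Polynomial.degree_modByMonic_lt fpol hgm
        have hd4 : (gpoly.map (algebraMap O_M M)).degree = gpoly.degree := by
          rw [hgmap, hgp, Polynomial.degree_X_pow_sub_C hp.pos,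
            Polynomial.degree_X_pow_sub_C hp.pos]
        have h5 := hd4 ▸ ((hd1.trans hd2).trans_lt hd3)
        exact lt_irrefl _ h5
      have hr0' : fpol %ₘ gpoly = 0 :=
        Polynomial.map_injective (algebraMap O_M M) hinjMO
          (by rw [hr0, Polynomial.map_zero])
      exact ⟨fpol /ₘ gpoly, by conv_lhs => rw [← hr, hr0', zero_add]⟩
    · rintro ⟨t, rfl⟩
      rw [map_mul]
      have h6 : Polynomial.aeval b gpoly = 0 := by
        rw [hgp, map_sub, map_pow, Polynomial.aeval_X, Polynomial.aeval_C, ha, sub_self]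
      rw [h6, zero_mul]
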